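/- Let (A,B) be a pair of nonempty convex subsets of a strictly convex normed linear space X. Then for every x ∈ A₀ there exists exactly one point y ∈ B₀ with ‖x−y‖ = dist(A,B), and for every y ∈ B₀ there exists exactly one point x ∈ A₀ with ‖x−y‖ = dist(A,B). (Thus the proximity projection P : A₀ ∪ B₀ → A₀ ∪ B₀, sending each point to its unique proximal point in the opposite set, is well defined.) -/
import Mathlib


open Set

/-- `setDist A B = inf {‖x - y‖ : x ∈ A, y ∈ B}`. -/
noncomputable def setDist {X : Type*} [NormedAddCommGroup X] (A B : Set X) : ℝ :=
  sInf ((fun p : X × X => ‖p.1 - p.2‖) '' (A ×ˢ B))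

/-- `A₀ = {x ∈ A : ‖x - y‖ = dist(A,B) for some y ∈ B}`. -/
noncomputable def proxA {X : Type*} [NormedAddCommGroup X] (A B : Set X) : Set X :=
  {x ∈ A | ∃ y ∈ B, ‖x - y‖ = setDist A B}

/-- `B₀ = {y ∈ B : ‖x - y‖ = dist(A,B) for some x ∈ A}`. -/
noncomputable def proxB {X : Type*} [NormedAddCommGroup X] (A B : Set X) : Set X :=
  {y ∈ B | ∃ x ∈ A, ‖x - y‖ = setDist A B}

lemma setDist_le {X : Type*} [NormedAddCommGroup X] {A B : Set X} {x y : X}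
    (hx : x ∈ A) (hy : y ∈ B) : setDist A B ≤ ‖x - y‖ := by
  apply csInf_le
  · exact ⟨0, fun r ⟨p, _, hp⟩ => hp ▸ norm_nonneg _⟩
  · exact ⟨(x, y), ⟨hx, hy⟩, rfl⟩

lemma prox_unique {X : Type*} [NormedAddCommGroup X] [NormedSpace ℝ X] [StrictConvexSpace ℝ X]
    {B : Set X} (hBconv : Convex ℝ B) {x y₁ y₂ : X} {d : ℝ}
    (hd : ∀ z ∈ B, d ≤ ‖x - z‖)
    (hy₁ : y₁ ∈ B) (hy₂ : y₂ ∈ B) (h₁ : ‖x - y₁‖ = d)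
    (h₂ : ‖x - y₂‖ = d) : y₁ = y₂ := by
  by_contra hne
  have hne' : x - y₁ ≠ x - y₂ := fun h => hne (sub_right_injective h)
  have hlt : ‖(1 / 2 : ℝ) • ((x - y₁) + (x - y₂))‖ < ‖x - y₁‖ :=
    (norm_midpoint_lt_iff (h₁.trans h₂.symm)).mpr hne'
  have hmid : (1 / 2 : ℝ) • ((x - y₁) + (x - y₂)) = x - ((1/2 : ℝ) • y₁ + (1/2 : ℝ) • y₂) := by
    rw [smul_add]
    module
  have hmem : (1/2 : ℝ) • y₁ + (1/2 : ℝ) • y₂ ∈ B :=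
    hBconv hy₁ hy₂ (by norm_num) (by norm_num) (by norm_num)
  have := hd _ hmem
  rw [hmid] at hlt
  linarith [h₁ ▸ hlt]

/-- In a strictly convex space, for a pair of nonempty convex sets, every point of `A₀` has a
unique proximal point in `B₀` and vice versa; hence the proximity projection is well defined. -/
theorem proximity_projection_wellDefined
    {X : Type*} [NormedAddCommGroup X] [NormedSpace ℝ X] [StrictConvexSpace ℝ X]
    (A B : Set X) (hA : A.Nonempty) (hB : B.Nonempty)
    (hAconv : Convex ℝ A) (hBconv : Convex ℝ B) :
    (∀ x ∈ proxA A B, ∃! y, y ∈ proxB A B ∧ ‖x - y‖ = setDist A B) ∧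
      (∀ y ∈ proxB A B, ∃! x, x ∈ proxA A B ∧ ‖x - y‖ = setDist A B) := by
  constructor
  · rintro x ⟨hxA, y, hyB, hxy⟩
    refine ⟨y, ⟨⟨hyB, x, hxA, hxy⟩, hxy⟩, ?_⟩
    rintro y' ⟨⟨hy'B, -⟩, hxy'⟩
    exact prox_unique hBconv (fun z hz => setDist_le hxA hz) hy'B hyB hxy' hxy
  · rintro y ⟨hyB, x, hxA, hxy⟩
    refine ⟨x, ⟨⟨hxA, y, hyB, hxy⟩, hxy⟩, ?_⟩
    rintro x' ⟨⟨hx'A, -⟩, hx'y⟩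
    -- uniqueness on the A side: swap roles using ‖x - y‖ = ‖y - x‖
    have h1 : ‖y - x'‖ = setDist A B := by rwa [norm_sub_rev]
    have h2 : ‖y - x‖ = setDist A B := by rwa [norm_sub_rev]
    exact prox_unique hAconv (fun z hz => by rw [norm_sub_rev]; exact setDist_le hz hyB) hx'A hxA h1 h2
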